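/- Let G be a 2-connected graph, let x, y be distinct vertices, let W be an x,y-path, and suppose x is adjacent to a vertex z of W. Then G contains two internally disjoint x,y-paths, each aligned with W, one of which passes through z. -/

import Mathlib

open SimpleGraph

/-- `P'` is aligned with `P` (both starting at `x`): shared vertices appear in the
same relative order. -/
def Aligned {V : Type*} [DecidableEq V] {G : SimpleGraph V} {x a b : V}
    (P : G.Walk x a) (P' : G.Walk x b) : Prop :=
  ∀ u v : V, u ∈ P.support → v ∈ P.support → u ∈ P'.support → v ∈ P'.support →
    P.support.idxOf u < P.support.idxOf v →
    P'.support.idxOf u < P'.support.idxOf v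

/-- Two paths with common origin `x` are internally disjoint: every common vertex is a
common endpoint. -/
def IntDisjoint {V : Type*} {G : SimpleGraph V} {x a b : V}
    (P : G.Walk x a) (Q : G.Walk x b) : Prop :=
  ∀ v : V, v ∈ P.support → v ∈ Q.support → (v = x ∨ v = a) ∧ (v = x ∨ v = b)

/-- 2-connected: at least 3 vertices, connected, and no cut vertex. -/
def TwoConnected {V : Type*} [Fintype V] (G : SimpleGraph V) : Prop :=
  3 ≤ Fintype.card V ∧ G.Connected ∧
    ∀ v : V, ((⊤ : G.Subgraph).deleteVerts {v}).coe.Connected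

/-- A lollipop: a cycle `C` and a path `P` whose vertex sets meet exactly in the
vertex `a`, an endpoint of `P` lying on `C`. -/
def IsLollipop {V : Type*} {G : SimpleGraph V} {v a w : V}
    (C : G.Walk v v) (P : G.Walk a w) : Prop :=
  C.IsCycle ∧ P.IsPath ∧ a ∈ C.support ∧ ∀ u ∈ C.support, u ∈ P.support → u = a


section DiracHelpers

open List

variable {V : Type*} [DecidableEq V] {G : SimpleGraph V}

def AL (A B : List V) : Prop :=
  ∀ u v : V, u ∈ A → v ∈ A → u ∈ B → v ∈ B →
    A.idxOf u < A.idxOf v → B.idxOf u < B.idxOf v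

lemma AL_prefix {A B C : List V} (h : AL A (B ++ C)) : AL A B := by
  intro u v hu hv hu' hv' hlt
  have := h u v hu hv (mem_append_left _ hu') (mem_append_left _ hv') hlt
  rwa [idxOf_append_of_mem hu', idxOf_append_of_mem hv'] at this

lemma AL_A_snoc {A B : List V} {y : V} (hy : y ∉ B) (h : AL A B) : AL (A ++ [y]) B := by
  intro u v hu hv hu' hv' hlt
  have hu0 : u ∈ A := by
    rcases mem_append.1 hu with h' | h'
    · exact h'
    · simp at h'; subst h'; exact absurd hu' hy
  have hv0 : v ∈ A := by
    rcases mem_append.1 hv with h' | h'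
    · exact h'
    · simp at h'; subst h'; exact absurd hv' hy
  rw [idxOf_append_of_mem hu0, idxOf_append_of_mem hv0] at hlt
  exact h u v hu0 hv0 hu' hv' hlt

lemma AL_singleton {A : List V} {c : V} : AL A [c] := by
  intro u v hu hv hu' hv' hlt
  simp at hu' hv'; subst hu'; subst hv'; omega

lemma AL.le {A B : List V} (h : AL A B) {u v : V} (hu : u ∈ A) (hv : v ∈ A)
    (hu' : u ∈ B) (hv' : v ∈ B) (hle : B.idxOf u ≤ B.idxOf v) :
    A.idxOf u ≤ A.idxOf v := by
  by_contra hc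
  exact absurd (h v u hv hu hv' hu' (by omega)) (by omega)

lemma AL_append {A B C : List V} (hAB : AL A B)
    (h1 : ∀ b ∈ B, ∀ c ∈ C, b ∈ A → c ∈ A → b ≠ c → A.idxOf b < A.idxOf c)
    (h2 : ∀ c ∈ C, ∀ c' ∈ C, c ∈ A → c' ∈ A → A.idxOf c < A.idxOf c' →
      C.idxOf c < C.idxOf c')
    (hnd : (B ++ C).Nodup) : AL A (B ++ C) := by
  have hdisj := List.disjoint_of_nodup_append hnd
  intro u v hu hv hu' hv' hlt
  rcases mem_append.1 hu' with hub | huc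
  · rcases mem_append.1 hv' with hvb | hvc
    · rw [idxOf_append_of_mem hub, idxOf_append_of_mem hvb]
      exact hAB u v hu hv hub hvb hlt
    · have hvB : v ∉ B := fun hvB => hdisj hvB hvc
      rw [idxOf_append_of_mem hub, idxOf_append_of_notMem hvB]
      calc B.idxOf u < B.length := idxOf_lt_length_iff.2 hub
        _ ≤ B.length + C.idxOf v := Nat.le_add_right _ _
  · rcases mem_append.1 hv' with hvb | hvc
    · exact absurd (h1 v hvb u huc hv hu (fun h => by subst h; omega)) (by omega)
    · have huB : u ∉ B := fun h' => hdisj h' huc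
      have hvB : v ∉ B := fun h' => hdisj h' hvc
      rw [idxOf_append_of_notMem huB, idxOf_append_of_notMem hvB]
      have := h2 u huc v hvc hu hv hlt
      omega

lemma exists_min_idx {l : List V} {S : V → Prop} (hne : ∃ v ∈ l, S v) :
    ∃ s ∈ l, S s ∧ ∀ v ∈ l, S v → l.idxOf s ≤ l.idxOf v := by
  classical
  induction l with
  | nil => simp at hne
  | cons hd tl ih =>
    by_cases hS : S hd
    · exact ⟨hd, mem_cons_self, hS, fun v hv hSv => by simp⟩
    · have : ∃ v ∈ tl, S v := by
        obtain ⟨v, hv, hSv⟩ := hne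
        rcases mem_cons.1 hv with rfl | hv
        · exact absurd hSv hS
        · exact ⟨v, hv, hSv⟩
      obtain ⟨s, hs, hSs, hmin⟩ := ih this
      have hshd : hd ≠ s := fun h => hS (h ▸ hSs)
      refine ⟨s, mem_cons_of_mem _ hs, hSs, fun v hv hSv => ?_⟩
      have hvhd : hd ≠ v := fun h => hS (h ▸ hSv)
      rcases mem_cons.1 hv with rfl | hv
      · exact absurd rfl hvhd
      · rw [idxOf_cons_ne _ hshd, idxOf_cons_ne _ hvhd]
        exact Nat.succ_le_succ (hmin v hv hSv)

lemma exists_max_idx {l : List V} {S : V → Prop} (hnd : l.Nodup) (hne : ∃ v ∈ l, S v) :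
    ∃ s ∈ l, S s ∧ ∀ v ∈ l, S v → l.idxOf v ≤ l.idxOf s := by
  classical
  induction l with
  | nil => simp at hne
  | cons hd tl ih =>
    by_cases htl : ∃ v ∈ tl, S v
    · obtain ⟨s, hs, hSs, hmax⟩ := ih (List.nodup_cons.1 hnd).2 htl
      have hshd : hd ≠ s := fun h => (List.nodup_cons.1 hnd).1 (h ▸ hs)
      refine ⟨s, mem_cons_of_mem _ hs, hSs, fun v hv hSv => ?_⟩
      rcases mem_cons.1 hv with rfl | hv
      · rw [idxOf_cons_self, idxOf_cons_ne _ hshd]; omega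
      · have hvhd : hd ≠ v := fun h => (List.nodup_cons.1 hnd).1 (h ▸ hv)
        rw [idxOf_cons_ne _ hshd, idxOf_cons_ne _ hvhd]
        exact Nat.succ_le_succ (hmax v hv hSv)
    · obtain ⟨v, hv, hSv⟩ := hne
      rcases mem_cons.1 hv with rfl | hv
      · refine ⟨v, mem_cons_self, hSv, fun v' hv' hSv' => ?_⟩
        rcases mem_cons.1 hv' with rfl | hv'
        · omega
        · exact absurd ⟨v', hv', hSv'⟩ htl
      · exact absurd ⟨v, hv, hSv⟩ htl
lemma support_dropLast_concat {a c : V} (q : G.Walk a c) :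
    q.support.dropLast ++ [c] = q.support := by
  induction q with
  | nil => simp
  | cons h p ih =>
    rw [SimpleGraph.Walk.support_cons]
    cases hsup : p.support with
    | nil => exact absurd hsup p.support_ne_nil
    | cons hd tl =>
      rw [hsup] at ih
      rw [List.dropLast_cons₂, List.cons_append, ih]

/-- `c` (the end) has the largest index in a nodup walk support. -/
lemma idx_lt_end {a c v : V} (q : G.Walk a c) (hnd : q.support.Nodup)
    (hv : v ∈ q.support) (hne : v ≠ c) :
    q.support.idxOf v < q.support.idxOf c := by
  have hdec := support_dropLast_concat q
  have hcnd : c ∉ q.support.dropLast := by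
    rw [← hdec] at hnd
    have := List.nodup_append.1 hnd
    intro hc; exact this.2.2 _ hc _ (by simp) rfl
  have hvd : v ∈ q.support.dropLast := by
    rw [← hdec] at hv
    rcases List.mem_append.1 hv with h | h
    · exact h
    · simp at h; exact absurd h hne
  rw [← hdec, idxOf_append_of_mem hvd, idxOf_append_of_notMem hcnd]
  simp only [idxOf_cons_self, Nat.add_zero]
  exact idxOf_lt_length_iff.2 hvd

lemma idx_le_end {a c v : V} (q : G.Walk a c) (hnd : q.support.Nodup)
    (hv : v ∈ q.support) :
    q.support.idxOf v ≤ q.support.idxOf c := by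
  by_cases h : v = c
  · subst h; exact le_rfl
  · exact (idx_lt_end q hnd hv h).le

lemma support_take_drop {a b c : V} (p : G.Walk a b) (h : c ∈ p.support) :
    p.support = (p.takeUntil c h).support ++ (p.dropUntil c h).support.tail := by
  conv_lhs => rw [← p.take_spec h]
  exact SimpleGraph.Walk.support_append _ _

lemma idx_take {a b c v : V} (p : G.Walk a b) (h : c ∈ p.support)
    (hv : v ∈ (p.takeUntil c h).support) :
    p.support.idxOf v = (p.takeUntil c h).support.idxOf v := by
  rw [support_take_drop p h, idxOf_append_of_mem hv]

lemma take_drop_inter {a b c v : V} (p : G.Walk a b) (hnd : p.support.Nodup)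
    (h : c ∈ p.support) (h1 : v ∈ (p.takeUntil c h).support)
    (h2 : v ∈ (p.dropUntil c h).support) : v = c := by
  by_contra hne
  have hdec := support_take_drop p h
  rw [hdec] at hnd
  have hdisj := List.disjoint_of_nodup_append hnd
  have h2' : v ∈ (p.dropUntil c h).support.tail := by
    have := (p.dropUntil c h).support_eq_cons
    rw [this] at h2
    rcases List.mem_cons.1 h2 with h' | h'
    · exact absurd h' hne
    · exact h'
  exact hdisj h1 h2'

lemma mem_take_of_idx_le {a b c v : V} (p : G.Walk a b) (h : c ∈ p.support)
    (hv : v ∈ p.support) (hle : p.support.idxOf v ≤ p.support.idxOf c) :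
    v ∈ (p.takeUntil c h).support := by
  by_contra hc
  have hdec := support_take_drop p h
  have hc' : c ∈ (p.takeUntil c h).support := SimpleGraph.Walk.end_mem_support _
  have h1 : p.support.idxOf c < (p.takeUntil c h).support.length := by
    rw [idx_take p h hc']; exact idxOf_lt_length_iff.2 hc'
  have h2 : (p.takeUntil c h).support.length ≤ p.support.idxOf v := by
    rw [hdec, idxOf_append_of_notMem hc]; exact Nat.le_add_right _ _
  omega

lemma append_isPath {a b c : V} {p : G.Walk a b} {q : G.Walk b c}
    (hp : p.IsPath) (hq : q.IsPath)
    (hmid : ∀ v, v ∈ p.support → v ∈ q.support → v = b) :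
    (p.append q).IsPath := by
  apply SimpleGraph.Walk.IsPath.mk'
  rw [SimpleGraph.Walk.support_append, List.nodup_append]
  refine ⟨hp.support_nodup, ?_, ?_⟩
  · have := hq.support_nodup
    rw [q.support_eq_cons] at this
    exact (List.nodup_cons.1 this).2
  · intro v hv b hv' hvb
    subst hvb
    have hvq : v ∈ q.support := by
      rw [q.support_eq_cons]; exact List.mem_cons_of_mem _ hv'
    have : v = b := hmid v hv hvq
    subst this
    have := hq.support_nodup
    rw [q.support_eq_cons] at this
    exact (List.nodup_cons.1 this).1 hv'

/-- first hit of `S` along a path. -/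
lemma exists_min_idx' {l : List V} {S : V → Prop} (hne : ∃ v ∈ l, S v) :
    ∃ s ∈ l, S s ∧ ∀ v ∈ l, S v → l.idxOf s ≤ l.idxOf v := by
  classical
  induction l with
  | nil => simp at hne
  | cons hd tl ih =>
    by_cases hS : S hd
    · exact ⟨hd, mem_cons_self, hS, fun v hv hSv => by simp⟩
    · have : ∃ v ∈ tl, S v := by
        obtain ⟨v, hv, hSv⟩ := hne
        rcases mem_cons.1 hv with rfl | hv
        · exact absurd hSv hS
        · exact ⟨v, hv, hSv⟩
      obtain ⟨s, hs, hSs, hmin⟩ := ih this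
      have hshd : hd ≠ s := fun h => hS (h ▸ hSs)
      refine ⟨s, mem_cons_of_mem _ hs, hSs, fun v hv hSv => ?_⟩
      have hvhd : hd ≠ v := fun h => hS (h ▸ hSv)
      rcases mem_cons.1 hv with rfl | hv
      · exact absurd rfl hvhd
      · rw [idxOf_cons_ne _ hshd, idxOf_cons_ne _ hvhd]
        exact Nat.succ_le_succ (hmin v hv hSv)

lemma exists_first_hit {a b : V} (p : G.Walk a b) (hp : p.IsPath)
    {S : V → Prop} (hb : S b) :
    ∃ u, ∃ hu : u ∈ p.support, S u ∧
      ∀ v ∈ (p.takeUntil u hu).support, S v → v = u := by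
  obtain ⟨u, hu, hSu, hmin⟩ := exists_min_idx' ⟨b, p.end_mem_support, hb⟩
  refine ⟨u, hu, hSu, fun v hv hSv => ?_⟩
  have hvp : v ∈ p.support := SimpleGraph.Walk.support_takeUntil_subset _ _ hv
  have h1 : p.support.idxOf v ≤ p.support.idxOf u := by
    rw [idx_take p hu hv, idx_take p hu (SimpleGraph.Walk.end_mem_support _)]
    exact idx_le_end _ (hp.takeUntil hu).support_nodup hv
  have h2 := hmin v hvp hSv
  exact (List.idxOf_inj hvp).1 (Nat.le_antisymm h1 h2)
lemma avoid_path {t a b : V}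
    (hconn : ((⊤ : G.Subgraph).deleteVerts {t}).coe.Connected)
    (ha : a ≠ t) (hb : b ≠ t) :
    ∃ p : G.Walk a b, p.IsPath ∧ t ∉ p.support := by
  have hav : a ∈ ((⊤ : G.Subgraph).deleteVerts {t}).verts := by simp [ha]
  have hbv : b ∈ ((⊤ : G.Subgraph).deleteVerts {t}).verts := by simp [hb]
  obtain ⟨q⟩ := hconn ⟨a, hav⟩ ⟨b, hbv⟩
  let q' : G.Walk a b := q.map ((⊤ : G.Subgraph).deleteVerts {t}).hom
  refine ⟨q'.bypass, q'.bypass_isPath, fun hmem => ?_⟩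
  have := q'.support_bypass_subset hmem
  rw [show q'.support = _ from SimpleGraph.Walk.support_map _ _] at this
  obtain ⟨⟨v, hv⟩, _, hv2⟩ := List.mem_map.1 this
  simp only [Subgraph.hom] at hv2
  simp only [Subgraph.deleteVerts_verts, Subgraph.verts_top, Set.mem_diff,
    Set.mem_singleton_iff] at hv
  exact hv.2 (by exact hv2)

lemma exists_neighbor {t x : V} [Fintype V] (hcard : 3 ≤ Fintype.card V)
    (hconn : ((⊤ : G.Subgraph).deleteVerts {t}).coe.Connected)
    (hx : x ≠ t) : ∃ w, G.Adj x w ∧ w ≠ t := by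
  -- there is a vertex besides x and t
  have : ∃ v : V, v ≠ x ∧ v ≠ t := by
    by_contra hc
    push_neg at hc
    have hsub : (Finset.univ : Finset V) ⊆ {x, t} := by
      intro v _
      rcases eq_or_ne v x with rfl | hvx
      · simp
      · simp [hc v hvx]
    have := Finset.card_le_card hsub
    have h2 : ({x, t} : Finset V).card ≤ 2 := Finset.card_insert_le _ _ |>.trans (by simp)
    simp [Finset.card_univ] at this
    omega
  obtain ⟨v, hvx, hvt⟩ := this
  have hxv : x ∈ ((⊤ : G.Subgraph).deleteVerts {t}).verts := by simp [hx]
  have hvv : v ∈ ((⊤ : G.Subgraph).deleteVerts {t}).verts := by simp [hvt]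
  obtain ⟨q⟩ := hconn ⟨x, hxv⟩ ⟨v, hvv⟩
  cases q with
  | nil => exact absurd rfl hvx.symm
  | @cons _ b _ h p =>
    have hb := b.2
    simp only [Subgraph.deleteVerts_verts, Subgraph.verts_top, Set.mem_diff,
      Set.mem_singleton_iff] at hb
    have hadj : G.Adj x b.1 := by
      have := h
      simp only [Subgraph.coe_adj, Subgraph.deleteVerts_adj, Subgraph.top_adj] at this
      exact this.2.2.2.2
    exact ⟨b.1, hadj, hb.2⟩

lemma walk_concat_decomp {x y : V} (W : G.Walk x y) (h : x ≠ y) :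
    ∃ (w : V) (W₀ : G.Walk x w) (e : G.Adj w y), W = W₀.concat e := by
  cases hw : W.reverse with
  | nil => exact absurd rfl h
  | @cons _ w _ hadj q =>
    refine ⟨w, q.reverse, hadj.symm, ?_⟩
    have h2 : W.reverse.reverse = (SimpleGraph.Walk.cons hadj q).reverse := by rw [hw]
    rwa [SimpleGraph.Walk.reverse_reverse, SimpleGraph.Walk.reverse_cons,
      ← SimpleGraph.Walk.concat_eq_append] at h2



lemma sconcat {x w y : V} (q : G.Walk x w) (e : G.Adj w y) :
    (q.concat e).support = q.support ++ [y] := by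
  rw [SimpleGraph.Walk.support_concat]

lemma concat_isPath {x w y : V} {q : G.Walk x w} (hq : q.IsPath) (e : G.Adj w y)
    (hy : y ∉ q.support) : (q.concat e).IsPath := by
  rw [SimpleGraph.Walk.concat_eq_append]
  refine append_isPath hq ?_ ?_
  · exact SimpleGraph.Walk.IsPath.nil.cons (by simpa using e.ne)
  · intro v hv hv'
    have hv2 : v = w ∨ v = y := by simpa using hv'
    rcases hv2 with rfl | rfl
    · rfl
    · exact absurd hv hy

lemma idx_lt_idx_y {A : List V} {y b : V} (hyA : y ∉ A) (hb : b ∈ A) :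
    (A ++ [y]).idxOf b < (A ++ [y]).idxOf y := by
  rw [idxOf_append_of_mem hb, idxOf_append_of_notMem hyA]
  simp only [idxOf_cons_self, Nat.add_zero]
  exact idxOf_lt_length_iff.2 hb

lemma AL_snoc_y {A B : List V} {y : V} (hyA : y ∉ A) (hyB : y ∉ B)
    (h : AL A B) (hnd : (B ++ [y]).Nodup) : AL (A ++ [y]) (B ++ [y]) := by
  refine AL_append (AL_A_snoc hyB h) ?_ ?_ hnd
  · intro b hb c hc hbA hcA hbc
    simp only [mem_singleton] at hc; subst hc
    have hbA' : b ∈ A := by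
      rcases mem_append.1 hbA with h' | h'
      · exact h'
      · simp at h'; subst h'; exact absurd hb hyB
    exact idx_lt_idx_y hyA hbA'
  · intro c hc c' hc' _ _ hlt
    simp only [mem_singleton] at hc hc'; subst hc; subst hc'; omega

lemma IntDisjoint_symm {x a b : V} {P : G.Walk x a} {Q : G.Walk x b}
    (h : IntDisjoint P Q) : IntDisjoint Q P :=
  fun v hv hv' => ⟨(h v hv' hv).2, (h v hv' hv).1⟩

lemma ML_case_y {x w y : V} {W₀ : G.Walk x w} (e : G.Adj w y)
    (hyW : y ∉ W₀.support) (hxy : x ≠ y)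
    {Q1 Q2 : G.Walk x w} (hQ1 : Q1.IsPath) (hQ2 : Q2.IsPath)
    (hdisj : IntDisjoint Q1 Q2)
    (hA1 : AL W₀.support Q1.support) (hA2 : AL W₀.support Q2.support)
    (hy1 : y ∈ Q1.support) :
    ∃ P1 P2 : G.Walk x y, P1.IsPath ∧ P2.IsPath ∧ P1 ≠ P2 ∧ IntDisjoint P1 P2 ∧
      AL (W₀.concat e).support P1.support ∧ AL (W₀.concat e).support P2.support := by
  have hyw : y ≠ w := fun h => hyW (h ▸ W₀.end_mem_support)
  have hy2 : y ∉ Q2.support := by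
    intro h
    rcases (hdisj y hy1 h).1 with h' | h'
    · exact hxy h'.symm
    · exact hyw h'
  set P1 : G.Walk x y := Q1.takeUntil y hy1 with hP1def
  set P2 : G.Walk x y := Q2.concat e with hP2def
  have hP1 : P1.IsPath := hQ1.takeUntil hy1
  have hP2 : P2.IsPath := concat_isPath hQ2 e hy2
  have sP2 : P2.support = Q2.support ++ [y] := sconcat Q2 e
  have sA : (W₀.concat e).support = W₀.support ++ [y] := sconcat W₀ e
  have hwP1 : w ∉ P1.support := by
    intro h
    exact hyw (take_drop_inter Q1 hQ1.support_nodup hy1 h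
      ((Q1.dropUntil y hy1).end_mem_support)).symm
  have hwP2 : w ∈ P2.support := by rw [sP2]; exact mem_append_left _ Q2.end_mem_support
  -- support decomposition of P1
  have sP1 : P1.support = P1.support.dropLast ++ [y] := (support_dropLast_concat P1).symm
  have hyD : y ∉ P1.support.dropLast := by
    have := hP1.support_nodup
    rw [sP1, List.nodup_append] at this
    intro h; exact this.2.2 _ h _ (by simp) rfl
  have hQ1dec : Q1.support = P1.support.dropLast ++ ([y] ++ (Q1.dropUntil y hy1).support.tail) := by
    rw [← List.append_assoc, ← sP1]
    exact support_take_drop Q1 hy1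
  refine ⟨P1, P2, hP1, hP2, ?_, ?_, ?_, ?_⟩
  · intro h; rw [h] at hwP1; exact hwP1 hwP2
  · intro v hv1 hv2
    rw [sP2] at hv2
    rcases mem_append.1 hv2 with hv2 | hv2
    · have hvQ1 : v ∈ Q1.support := SimpleGraph.Walk.support_takeUntil_subset _ _ hv1
      rcases (hdisj v hvQ1 hv2).1 with h' | h'
      · exact ⟨Or.inl h', Or.inl h'⟩
      · subst h'; exact absurd hv1 hwP1
    · simp at hv2; subst hv2; exact ⟨Or.inr rfl, Or.inr rfl⟩
  · -- AL for P1
    rw [sA, sP1]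
    have h1 : AL W₀.support P1.support.dropLast := by
      apply AL_prefix (C := [y] ++ (Q1.dropUntil y hy1).support.tail)
      rw [← hQ1dec]; exact hA1
    apply AL_snoc_y hyW hyD h1
    rw [← sP1]; exact hP1.support_nodup
  · rw [sA, sP2]
    apply AL_snoc_y hyW hy2 hA2
    rw [← sP2]; exact hP2.support_nodup

lemma ML_case_u {x w y : V} {W₀ : G.Walk x w} (e : G.Adj w y)
    (hyW : y ∉ W₀.support) (hxy : x ≠ y)
    {Q1 Q2 : G.Walk x w} (hQ1 : Q1.IsPath) (hQ2 : Q2.IsPath)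
    (hdisj : IntDisjoint Q1 Q2)
    (hA1 : AL W₀.support Q1.support) (hA2 : AL W₀.support Q2.support)
    (hy1 : y ∉ Q1.support) (hy2 : y ∉ Q2.support)
    {R : G.Walk y x} (hR : R.IsPath) (hwR : w ∉ R.support)
    {u : V} (hu : u ∈ R.support) (huQ1 : u ∈ Q1.support)
    (hmin : ∀ v ∈ (R.takeUntil u hu).support,
      (v ∈ Q1.support ∨ v ∈ Q2.support ∨ v ∈ W₀.support) → v = u) :
    ∃ P1 P2 : G.Walk x y, P1.IsPath ∧ P2.IsPath ∧ P1 ≠ P2 ∧ IntDisjoint P1 P2 ∧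
      AL (W₀.concat e).support P1.support ∧ AL (W₀.concat e).support P2.support := by
  have huw : u ≠ w := fun h => hwR (h ▸ hu)
  have huy : u ≠ y := fun h => hy1 (h ▸ huQ1)
  set Rseg : G.Walk y u := R.takeUntil u hu with hRsegdef
  set T1 : G.Walk x u := Q1.takeUntil u huQ1 with hT1def
  set P1 : G.Walk x y := T1.append Rseg.reverse with hP1def
  set P2 : G.Walk x y := Q2.concat e with hP2def
  have hRseg : Rseg.IsPath := hR.takeUntil hu
  have hT1 : T1.IsPath := hQ1.takeUntil huQ1
  have sRrev : Rseg.reverse.support = u :: Rseg.reverse.support.tail :=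
    Rseg.reverse.support_eq_cons
  have hRrevmem : ∀ v ∈ Rseg.reverse.support, v ∈ Rseg.support := by
    intro v hv
    rwa [SimpleGraph.Walk.support_reverse, List.mem_reverse] at hv
  have hu_notin_tail : u ∉ Rseg.reverse.support.tail := by
    have := hRseg.reverse.support_nodup
    rw [sRrev] at this
    exact (List.nodup_cons.1 this).1
  have htail_sub : ∀ v ∈ Rseg.reverse.support.tail, v ∈ Rseg.support := by
    intro v hv
    exact hRrevmem v (by rw [sRrev]; exact mem_cons_of_mem _ hv)
  -- tail elements hit nothing
  have htail_clean : ∀ v ∈ Rseg.reverse.support.tail,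
      v ∉ Q1.support ∧ v ∉ Q2.support ∧ v ∉ W₀.support := by
    intro v hv
    have hvR := htail_sub v hv
    constructor
    · intro h; exact hu_notin_tail ((hmin v hvR (Or.inl h)) ▸ hv)
    constructor
    · intro h; exact hu_notin_tail ((hmin v hvR (Or.inr (Or.inl h))) ▸ hv)
    · intro h; exact hu_notin_tail ((hmin v hvR (Or.inr (Or.inr h))) ▸ hv)
  have hwT1 : w ∉ T1.support := by
    intro h
    exact huw (take_drop_inter Q1 hQ1.support_nodup huQ1 h
      ((Q1.dropUntil u huQ1).end_mem_support)).symm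
  have hP1 : P1.IsPath := by
    refine append_isPath hT1 hRseg.reverse ?_
    intro v hvT hvRrev
    exact hmin v (hRrevmem v hvRrev) (Or.inl (SimpleGraph.Walk.support_takeUntil_subset _ _ hvT))
  have hP2 : P2.IsPath := concat_isPath hQ2 e hy2
  have sP1 : P1.support = T1.support ++ Rseg.reverse.support.tail :=
    SimpleGraph.Walk.support_append _ _
  have sP2 : P2.support = Q2.support ++ [y] := sconcat Q2 e
  have sA : (W₀.concat e).support = W₀.support ++ [y] := sconcat W₀ e
  have hyT1 : y ∉ T1.support := fun h => hy1 (SimpleGraph.Walk.support_takeUntil_subset _ _ h)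
  have hwP1 : w ∉ P1.support := by
    rw [sP1]
    intro h
    rcases mem_append.1 h with h' | h'
    · exact hwT1 h'
    · exact hwR (SimpleGraph.Walk.support_takeUntil_subset _ _ (htail_sub w h'))
  have hwP2 : w ∈ P2.support := by rw [sP2]; exact mem_append_left _ Q2.end_mem_support
  -- RrevTail ∩ A' ⊆ {y}
  have htail_A : ∀ c ∈ Rseg.reverse.support.tail, c ∈ W₀.support ++ [y] → c = y := by
    intro c hc hcA
    rcases mem_append.1 hcA with h' | h'
    · exact absurd h' (htail_clean c hc).2.2
    · simpa using h'
  refine ⟨P1, P2, hP1, hP2, ?_, ?_, ?_, ?_⟩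
  · intro h; rw [h] at hwP1; exact hwP1 hwP2
  · intro v hv1 hv2
    rw [sP2] at hv2
    rcases mem_append.1 hv2 with hv2 | hv2
    · rw [sP1] at hv1
      rcases mem_append.1 hv1 with hv1 | hv1
      · have hvQ1 : v ∈ Q1.support := SimpleGraph.Walk.support_takeUntil_subset _ _ hv1
        rcases (hdisj v hvQ1 hv2).1 with h' | h'
        · exact ⟨Or.inl h', Or.inl h'⟩
        · subst h'; exact absurd hv1 hwT1
      · exact absurd hv2 (htail_clean v hv1).2.1
    · simp at hv2; subst hv2; exact ⟨Or.inr rfl, Or.inr rfl⟩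
  · -- AL for P1
    rw [sA, sP1]
    have hQ1dec : Q1.support = T1.support ++ (Q1.dropUntil u huQ1).support.tail :=
      support_take_drop Q1 huQ1
    have hbase : AL (W₀.support ++ [y]) T1.support := by
      apply AL_A_snoc hyT1
      apply AL_prefix (C := (Q1.dropUntil u huQ1).support.tail)
      rw [← hQ1dec]; exact hA1
    refine AL_append hbase ?_ ?_ ?_
    · intro b hb c hc hbA hcA hbc
      have hcy : c = y := htail_A c hc hcA
      subst hcy
      have hbW : b ∈ W₀.support := by
        rcases mem_append.1 hbA with h' | h'
        · exact h'
        · simp at h'; subst h'; exact absurd hb hyT1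
      exact idx_lt_idx_y hyW hbW
    · intro c hc c' hc' hcA hcA' hlt
      have h1 := htail_A c hc hcA
      have h2 := htail_A c' hc' hcA'
      subst h1; subst h2; omega
    · rw [← sP1]; exact hP1.support_nodup
  · rw [sA, sP2]
    apply AL_snoc_y hyW hy2 hA2
    rw [← sP2]; exact hP2.support_nodup

lemma ML_case_w {x w y : V} {W₀ : G.Walk x w} (hW₀ : W₀.IsPath) (e : G.Adj w y)
    (hyW : y ∉ W₀.support) (hxy : x ≠ y)
    {Q1 Q2 : G.Walk x w} (hQ1 : Q1.IsPath) (hQ2 : Q2.IsPath)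
    (hdisj : IntDisjoint Q1 Q2)
    (hA1 : AL W₀.support Q1.support) (hA2 : AL W₀.support Q2.support)
    (hy1 : y ∉ Q1.support) (hy2 : y ∉ Q2.support)
    {R : G.Walk y x} (hR : R.IsPath) (hwR : w ∉ R.support)
    {u : V} (hu : u ∈ R.support) (huW : u ∈ W₀.support)
    (hu1 : u ∉ Q1.support) (hu2 : u ∉ Q2.support)
    (hmin : ∀ v ∈ (R.takeUntil u hu).support,
      (v ∈ Q1.support ∨ v ∈ Q2.support ∨ v ∈ W₀.support) → v = u)
    {s : V} (hsTu : s ∈ (W₀.takeUntil u huW).support) (hsQ1 : s ∈ Q1.support)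
    (hmax : ∀ v ∈ (W₀.takeUntil u huW).support, (v ∈ Q1.support ∨ v ∈ Q2.support) →
      (W₀.takeUntil u huW).support.idxOf v ≤ (W₀.takeUntil u huW).support.idxOf s) :
    ∃ P1 P2 : G.Walk x y, P1.IsPath ∧ P2.IsPath ∧ P1 ≠ P2 ∧ IntDisjoint P1 P2 ∧
      AL (W₀.concat e).support P1.support ∧ AL (W₀.concat e).support P2.support := by
  set Tu : G.Walk x u := W₀.takeUntil u huW with hTudef
  have hTu : Tu.IsPath := hW₀.takeUntil huW
  have hsW : s ∈ W₀.support := SimpleGraph.Walk.support_takeUntil_subset _ _ hsTu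
  have hsu : s ≠ u := fun h => hu1 (h ▸ hsQ1)
  have huw : u ≠ w := fun h => hu1 (h ▸ Q1.end_mem_support)
  have huy : u ≠ y := fun h => hyW (h ▸ huW)
  have hidx_s_u : W₀.support.idxOf s < W₀.support.idxOf u := by
    rw [idx_take W₀ huW hsTu, idx_take W₀ huW Tu.end_mem_support]
    exact idx_lt_end Tu hTu.support_nodup hsTu hsu
  have hsw : s ≠ w := by
    intro h
    have h2 : W₀.support.idxOf u ≤ W₀.support.idxOf w :=
      idx_le_end W₀ hW₀.support_nodup huW
    have h3 := hidx_s_u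
    rw [h] at h3
    omega
  set Ts : G.Walk x s := W₀.takeUntil s hsW with hTsdef
  set Ds : G.Walk s w := W₀.dropUntil s hsW with hDsdef
  have hTs : Ts.IsPath := hW₀.takeUntil hsW
  have hDs : Ds.IsPath := hW₀.dropUntil hsW
  have sDs : Ds.support = s :: Ds.support.tail := Ds.support_eq_cons
  have hsDst : s ∉ Ds.support.tail := by
    have := hDs.support_nodup
    rw [sDs] at this
    exact (List.nodup_cons.1 this).1
  have hnotTs : ∀ v ∈ Ds.support.tail, v ∉ Ts.support := by
    intro v hv hvTs
    have hvDs : v ∈ Ds.support := List.mem_of_mem_tail hv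
    have hveq := take_drop_inter W₀ hW₀.support_nodup hsW hvTs hvDs
    subst hveq; exact hsDst hv
  have huDs : u ∈ Ds.support := by
    by_contra hc
    have hu' : u ∈ Ts.support := by
      have := support_take_drop W₀ hsW
      rw [this] at huW
      rcases mem_append.1 huW with h' | h'
      · exact h'
      · exact absurd (List.mem_of_mem_tail h') hc
    have : W₀.support.idxOf u < W₀.support.idxOf s := by
      rw [idx_take W₀ hsW hu', idx_take W₀ hsW Ts.end_mem_support]
      exact idx_lt_end Ts hTs.support_nodup hu' hsu.symm
    omega
  set M : G.Walk s u := Ds.takeUntil u huDs with hMdef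
  have hM : M.IsPath := hDs.takeUntil huDs
  have hMsub : ∀ v ∈ M.support, v ∈ W₀.support := fun v hv =>
    SimpleGraph.Walk.support_dropUntil_subset _ _
      (SimpleGraph.Walk.support_takeUntil_subset _ _ hv)
  have sM : M.support = s :: M.support.tail := M.support_eq_cons
  have hsMt : s ∉ M.support.tail := by
    have := hM.support_nodup
    rw [sM] at this
    exact (List.nodup_cons.1 this).1
  have hDsdec : Ds.support.tail = M.support.tail ++ (Ds.dropUntil u huDs).support.tail := by
    conv_lhs => rw [← Ds.take_spec huDs]
    exact SimpleGraph.Walk.tail_support_append _ _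
  have hMtail_Dst : ∀ v ∈ M.support.tail, v ∈ Ds.support.tail := by
    intro v hv
    rw [hDsdec]
    exact mem_append_left _ hv
  have idx_tail : ∀ v ∈ Ds.support.tail,
      W₀.support.idxOf v = Ts.support.length + Ds.support.tail.idxOf v := by
    intro v hv
    rw [support_take_drop W₀ hsW, idxOf_append_of_notMem (hnotTs v hv)]
  have key1 : ∀ v ∈ M.support, v ≠ s → W₀.support.idxOf s < W₀.support.idxOf v := by
    intro v hv hvs
    have hvt : v ∈ M.support.tail := by
      rw [sM] at hv
      rcases mem_cons.1 hv with h' | h'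
      · exact absurd h' hvs
      · exact h'
    have hvDst := hMtail_Dst v hvt
    have h1 := idx_tail v hvDst
    have h2 : W₀.support.idxOf s < Ts.support.length := by
      rw [idx_take W₀ hsW Ts.end_mem_support]
      exact idxOf_lt_length_iff.2 Ts.end_mem_support
    omega
  have idx_tailM : ∀ v ∈ M.support.tail,
      W₀.support.idxOf v = Ts.support.length + M.support.tail.idxOf v := by
    intro v hv
    rw [idx_tail v (hMtail_Dst v hv), hDsdec, idxOf_append_of_mem hv]
  have huMt : u ∈ M.support.tail := by
    have hue : u ∈ M.support := M.end_mem_support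
    rw [sM] at hue
    rcases mem_cons.1 hue with h' | h'
    · exact absurd h'.symm hsu
    · exact h'
  have key3 : ∀ v ∈ M.support, W₀.support.idxOf v ≤ W₀.support.idxOf u := by
    intro v hv
    by_cases hvs : v = s
    · subst hvs; exact hidx_s_u.le
    · have hvt : v ∈ M.support.tail := by
        rw [sM] at hv
        rcases mem_cons.1 hv with h' | h'
        · exact absurd h' hvs
        · exact h'
      rw [idx_tailM v hvt, idx_tailM u huMt]
      have hle : M.support.idxOf v ≤ M.support.idxOf u :=
        idx_le_end M hM.support_nodup hv
      have e1 : M.support.idxOf v = M.support.tail.idxOf v + 1 := by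
        conv_lhs => rw [sM]
        rw [idxOf_cons_ne _ (fun h => hvs h.symm)]
      have e2 : M.support.idxOf u = M.support.tail.idxOf u + 1 := by
        conv_lhs => rw [sM]
        rw [idxOf_cons_ne _ (fun h => hsu h)]
      omega
  have hMclean : ∀ v ∈ M.support, (v ∈ Q1.support ∨ v ∈ Q2.support) → v = s := by
    intro v hv hQ
    by_contra hvs
    have hvW : v ∈ W₀.support := hMsub v hv
    have hvTu : v ∈ Tu.support :=
      mem_take_of_idx_le W₀ huW hvW (key3 v hv)
    have h1 := hmax v hvTu hQ
    rw [← idx_take W₀ huW hvTu, ← idx_take W₀ huW hsTu] at h1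
    exact absurd (key1 v hv hvs) (by omega)
  -- R segment
  set Rseg : G.Walk y u := R.takeUntil u hu with hRsegdef
  have hRseg : Rseg.IsPath := hR.takeUntil hu
  have sRrev : Rseg.reverse.support = u :: Rseg.reverse.support.tail :=
    Rseg.reverse.support_eq_cons
  have hRrevmem : ∀ v ∈ Rseg.reverse.support, v ∈ Rseg.support := by
    intro v hv
    rwa [SimpleGraph.Walk.support_reverse, List.mem_reverse] at hv
  have hu_notin_tail : u ∉ Rseg.reverse.support.tail := by
    have := hRseg.reverse.support_nodup
    rw [sRrev] at this
    exact (List.nodup_cons.1 this).1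
  have htail_sub : ∀ v ∈ Rseg.reverse.support.tail, v ∈ Rseg.support := by
    intro v hv
    exact hRrevmem v (by rw [sRrev]; exact mem_cons_of_mem _ hv)
  have htail_clean : ∀ v ∈ Rseg.reverse.support.tail,
      v ∉ Q1.support ∧ v ∉ Q2.support ∧ v ∉ W₀.support := by
    intro v hv
    have hvR := htail_sub v hv
    refine ⟨fun h => hu_notin_tail ((hmin v hvR (Or.inl h)) ▸ hv),
      fun h => hu_notin_tail ((hmin v hvR (Or.inr (Or.inl h))) ▸ hv),
      fun h => hu_notin_tail ((hmin v hvR (Or.inr (Or.inr h))) ▸ hv)⟩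
  -- paths
  set TQ : G.Walk x s := Q1.takeUntil s hsQ1 with hTQdef
  have hTQ : TQ.IsPath := hQ1.takeUntil hsQ1
  have hwTQ : w ∉ TQ.support := by
    intro h
    exact hsw (take_drop_inter Q1 hQ1.support_nodup hsQ1 h
      ((Q1.dropUntil s hsQ1).end_mem_support)).symm
  set inner : G.Walk s y := M.append Rseg.reverse with hinnerdef
  have hinner : inner.IsPath := by
    refine append_isPath hM hRseg.reverse ?_
    intro v hvM hvR
    exact hmin v (hRrevmem v hvR) (Or.inr (Or.inr (hMsub v hvM)))
  set P1 : G.Walk x y := TQ.append inner with hP1def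
  set P2 : G.Walk x y := Q2.concat e with hP2def
  have hP1 : P1.IsPath := by
    refine append_isPath hTQ hinner ?_
    intro v hvT hvI
    have hvQ1 : v ∈ Q1.support := SimpleGraph.Walk.support_takeUntil_subset _ _ hvT
    rw [SimpleGraph.Walk.support_append] at hvI
    rcases mem_append.1 hvI with h' | h'
    · exact hMclean v h' (Or.inl hvQ1)
    · exact absurd hvQ1 (htail_clean v h').1
  have hP2 : P2.IsPath := concat_isPath hQ2 e hy2
  have sP2 : P2.support = Q2.support ++ [y] := sconcat Q2 e
  have sA : (W₀.concat e).support = W₀.support ++ [y] := sconcat W₀ e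
  have sP1 : P1.support = (TQ.support ++ M.support.tail) ++ Rseg.reverse.support.tail := by
    rw [SimpleGraph.Walk.support_append, SimpleGraph.Walk.tail_support_append,
      List.append_assoc]
  have hyTQ : y ∉ TQ.support := fun h => hy1 (SimpleGraph.Walk.support_takeUntil_subset _ _ h)
  have hwP1 : w ∉ P1.support := by
    rw [sP1]
    intro h
    rcases mem_append.1 h with h' | h'
    · rcases mem_append.1 h' with h'' | h''
      · exact hwTQ h''
      · exact hsw (hMclean w (List.mem_of_mem_tail h'')
          (Or.inl Q1.end_mem_support)).symm
    · exact hwR (SimpleGraph.Walk.support_takeUntil_subset _ _ (htail_sub w h'))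
  have hwP2 : w ∈ P2.support := by rw [sP2]; exact mem_append_left _ Q2.end_mem_support
  have htail_A : ∀ c ∈ Rseg.reverse.support.tail, c ∈ W₀.support ++ [y] → c = y := by
    intro c hc hcA
    rcases mem_append.1 hcA with h' | h'
    · exact absurd h' (htail_clean c hc).2.2
    · simpa using h'
  refine ⟨P1, P2, hP1, hP2, ?_, ?_, ?_, ?_⟩
  · intro h; rw [h] at hwP1; exact hwP1 hwP2
  · intro v hv1 hv2
    rw [sP2] at hv2
    rcases mem_append.1 hv2 with hv2 | hv2
    · rw [sP1] at hv1
      rcases mem_append.1 hv1 with hv1 | hv1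
      · rcases mem_append.1 hv1 with hv1 | hv1
        · have hvQ1 : v ∈ Q1.support := SimpleGraph.Walk.support_takeUntil_subset _ _ hv1
          rcases (hdisj v hvQ1 hv2).1 with h' | h'
          · exact ⟨Or.inl h', Or.inl h'⟩
          · subst h'; exact absurd hv1 hwTQ
        · have := hMclean v (List.mem_of_mem_tail hv1)
            (Or.inr hv2)
          subst this; exact absurd hv1 hsMt
      · exact absurd hv2 (htail_clean v hv1).2.1
    · simp at hv2; subst hv2; exact ⟨Or.inr rfl, Or.inr rfl⟩
  · -- AL for P1
    rw [sA, sP1]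
    have hQ1dec : Q1.support = TQ.support ++ (Q1.dropUntil s hsQ1).support.tail :=
      support_take_drop Q1 hsQ1
    have hbase : AL (W₀.support ++ [y]) TQ.support := by
      apply AL_A_snoc hyTQ
      apply AL_prefix (C := (Q1.dropUntil s hsQ1).support.tail)
      rw [← hQ1dec]; exact hA1
    have hnd1 : ((TQ.support ++ M.support.tail) ++ Rseg.reverse.support.tail).Nodup := by
      rw [← sP1]; exact hP1.support_nodup
    have hstepA : AL (W₀.support ++ [y]) (TQ.support ++ M.support.tail) := by
      refine AL_append hbase ?_ ?_ (List.nodup_append.1 hnd1).1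
      · intro b hb c hc hbA hcA hbc
        have hbW : b ∈ W₀.support := by
          rcases mem_append.1 hbA with h' | h'
          · exact h'
          · simp at h'; subst h'; exact absurd hb hyTQ
        have hcM : c ∈ M.support := List.mem_of_mem_tail hc
        have hcW : c ∈ W₀.support := hMsub c hcM
        rw [idxOf_append_of_mem hbW, idxOf_append_of_mem hcW]
        have hbQ1 : b ∈ Q1.support := SimpleGraph.Walk.support_takeUntil_subset _ _ hb
        have hble : Q1.support.idxOf b ≤ Q1.support.idxOf s := by
          rw [idx_take Q1 hsQ1 hb, idx_take Q1 hsQ1 TQ.end_mem_support]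
          exact idx_le_end TQ hTQ.support_nodup hb
        have h1 : W₀.support.idxOf b ≤ W₀.support.idxOf s :=
          hA1.le hbW hsW hbQ1 hsQ1 hble
        have hcs : c ≠ s := fun h => hsMt (h ▸ hc)
        have h2 := key1 c hcM hcs
        omega
      · intro c hc c' hc' hcA hcA' hlt
        have hcW : c ∈ W₀.support := hMsub c (List.mem_of_mem_tail hc)
        have hcW' : c' ∈ W₀.support := hMsub c' (List.mem_of_mem_tail hc')
        rw [idxOf_append_of_mem hcW, idxOf_append_of_mem hcW',
          idx_tailM c hc, idx_tailM c' hc'] at hlt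
        omega
    refine AL_append hstepA ?_ ?_ hnd1
    · intro b hb c hc hbA hcA hbc
      have hcy : c = y := htail_A c hc hcA
      subst hcy
      have hbW : b ∈ W₀.support := by
        rcases mem_append.1 hb with h' | h'
        · rcases mem_append.1 hbA with h'' | h''
          · exact h''
          · simp at h''; subst h''
            exact absurd (SimpleGraph.Walk.support_takeUntil_subset _ _ h') hy1
        · exact hMsub b (List.mem_of_mem_tail h')
      exact idx_lt_idx_y hyW hbW
    · intro c hc c' hc' hcA hcA' hlt
      have h1 := htail_A c hc hcA
      have h2 := htail_A c' hc' hcA'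
      subst h1; subst h2; omega
  · rw [sA, sP2]
    apply AL_snoc_y hyW hy2 hA2
    rw [← sP2]; exact hP2.support_nodup

lemma AL_refl {A : List V} : AL A A := fun _ _ _ _ _ _ h => h

theorem ML [Fintype V] (hG : TwoConnected G) {x y : V} (hxy : x ≠ y) (W : G.Walk x y)
    (hW : W.IsPath) :
    ∃ P1 P2 : G.Walk x y, P1.IsPath ∧ P2.IsPath ∧ P1 ≠ P2 ∧ IntDisjoint P1 P2 ∧
      AL W.support P1.support ∧ AL W.support P2.support := by
  obtain ⟨hcard, hconn, hcut⟩ := hG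
  obtain ⟨n, hn⟩ : ∃ n, W.length = n := ⟨_, rfl⟩
  induction n using Nat.strong_induction_on generalizing x y W with
  | _ n IH =>
  obtain ⟨w, W₀, e, rfl⟩ := walk_concat_decomp W hxy
  have hW₀ : W₀.IsPath := by
    rw [SimpleGraph.Walk.concat_eq_append] at hW
    exact SimpleGraph.Walk.IsPath.of_append_left hW
  have hyW : y ∉ W₀.support := by
    have hnd := hW.support_nodup
    rw [sconcat W₀ e, List.nodup_append] at hnd
    exact fun h => hnd.2.2 _ h _ (by simp) rfl
  have sA : (W₀.concat e).support = W₀.support ++ [y] := sconcat W₀ e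
  by_cases hxw : x = w
  · -- base case: W is a single edge
    subst hxw
    have hWnil : W₀ = SimpleGraph.Walk.nil := SimpleGraph.Walk.isPath_iff_eq_nil.1 hW₀
    subst hWnil
    obtain ⟨w', hxw', hw'y⟩ := exists_neighbor hcard (hcut y) hxy
    obtain ⟨R', hR', hxR'⟩ := avoid_path (hcut x) hxw'.ne' (fun h => hxy h.symm)
    set P1 : G.Walk x y := SimpleGraph.Walk.nil.concat e with hP1def
    set P2 : G.Walk x y := SimpleGraph.Walk.cons hxw' R' with hP2def
    have hP1 : P1.IsPath := concat_isPath SimpleGraph.Walk.IsPath.nil e (by simpa using hxy.symm)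
    have hP2 : P2.IsPath := hR'.cons hxR'
    have sP1 : P1.support = [x, y] := by
      rw [hP1def, sconcat]; simp
    have sP2 : P2.support = x :: R'.support := rfl
    have hR'len : R'.length ≠ 0 := fun h => hw'y (R'.eq_of_length_eq_zero h ▸ rfl)
    have sAnil : (SimpleGraph.Walk.nil.concat e : G.Walk x y).support = [x, y] := sP1
    have e1 : ([x, y] : List V).idxOf x = 0 := by simp
    have e2 : ([x, y] : List V).idxOf y = 1 := by
      rw [idxOf_cons_ne _ hxy]; simp
    refine ⟨P1, P2, hP1, hP2, ?_, ?_, ?_, ?_⟩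
    · intro h
      have := congrArg SimpleGraph.Walk.length h
      rw [hP1def, hP2def] at this
      simp only [SimpleGraph.Walk.length_concat, SimpleGraph.Walk.length_cons, SimpleGraph.Walk.length_nil] at this
      omega
    · intro v hv1 hv2
      rw [sP1] at hv1
      rcases mem_cons.1 hv1 with rfl | hv1
      · exact ⟨Or.inl rfl, Or.inl rfl⟩
      · simp at hv1; subst hv1; exact ⟨Or.inr rfl, Or.inr rfl⟩
    · rw [sAnil, ← sP1]; exact AL_refl
    · rw [sAnil]
      intro a b ha hb ha' hb' hlt
      have hax : a = x ∨ a = y := by simpa using ha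
      have hbx : b = x ∨ b = y := by simpa using hb
      rcases hax with rfl | rfl <;> rcases hbx with rfl | rfl
      · omega
      · rw [sP2, idxOf_cons_self, idxOf_cons_ne _ hxy]; omega
      · rw [e1, e2] at hlt; omega
      · omega
  · -- inductive step
    have hlen : W₀.length < n := by
      rw [SimpleGraph.Walk.length_concat] at hn; omega
    obtain ⟨Q1, Q2, hQ1, hQ2, hne, hdisj, hA1, hA2⟩ := IH W₀.length hlen hxw W₀ hW₀ rfl
    by_cases hy1 : y ∈ Q1.support
    · exact ML_case_y e hyW hxy hQ1 hQ2 hdisj hA1 hA2 hy1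
    by_cases hy2 : y ∈ Q2.support
    · exact ML_case_y e hyW hxy hQ2 hQ1 (IntDisjoint_symm hdisj) hA2 hA1 hy2
    -- neither contains y
    have hyw : y ≠ w := fun h => hyW (h ▸ W₀.end_mem_support)
    obtain ⟨R, hR, hwR⟩ := avoid_path (hcut w) hyw hxw
    have hSx : x ∈ Q1.support ∨ x ∈ Q2.support ∨ x ∈ W₀.support :=
      Or.inl Q1.start_mem_support
    obtain ⟨u, hu, hSu, hmin⟩ := exists_first_hit R hR
      (S := fun v => v ∈ Q1.support ∨ v ∈ Q2.support ∨ v ∈ W₀.support) hSx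
    by_cases hu1 : u ∈ Q1.support
    · exact ML_case_u e hyW hxy hQ1 hQ2 hdisj hA1 hA2 hy1 hy2 hR hwR hu hu1 hmin
    by_cases hu2 : u ∈ Q2.support
    · exact ML_case_u e hyW hxy hQ2 hQ1 (IntDisjoint_symm hdisj) hA2 hA1 hy2 hy1 hR hwR hu hu2
        (fun v hv h => hmin v hv (by tauto))
    · have huW : u ∈ W₀.support := by tauto
      have hTu : (W₀.takeUntil u huW).IsPath := hW₀.takeUntil huW
      obtain ⟨s, hsTu, hsQ, hmax⟩ := exists_max_idx (S := fun v => v ∈ Q1.support ∨ v ∈ Q2.support)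
        hTu.support_nodup
        ⟨x, (W₀.takeUntil u huW).start_mem_support, Or.inl Q1.start_mem_support⟩
      rcases hsQ with hsQ1 | hsQ2
      · exact ML_case_w hW₀ e hyW hxy hQ1 hQ2 hdisj hA1 hA2 hy1 hy2 hR hwR hu huW hu1 hu2
          hmin hsTu hsQ1 hmax
      · exact ML_case_w hW₀ e hyW hxy hQ2 hQ1 (IntDisjoint_symm hdisj) hA2 hA1 hy2 hy1 hR hwR
          hu huW hu2 hu1 (fun v hv h => hmin v hv (by tauto)) hsTu hsQ2
          (fun v hv h => hmax v hv (by tauto))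

lemma idx_end_plus {a c : V} (q : G.Walk a c) (hnd : q.support.Nodup) :
    q.support.idxOf c + 1 = q.support.length := by
  have hdec := support_dropLast_concat q
  have hcd : c ∉ q.support.dropLast := by
    rw [← hdec] at hnd
    exact fun h => (List.nodup_append.1 hnd).2.2 _ h _ (by simp) rfl
  rw [← hdec, idxOf_append_of_notMem hcd]
  simp

lemma idx_start_lt {a b c : V} (p : G.Walk a b) (hc : c ∈ p.support) (hne : c ≠ a) :
    p.support.idxOf a < p.support.idxOf c := by
  rw [p.support_eq_cons, idxOf_cons_self, idxOf_cons_ne _ (fun h => hne h.symm)]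
  omega

lemma surgery {x y z : V} {W : G.Walk x y} (hW : W.IsPath) (hxy : x ≠ y)
    {P1 P2 : G.Walk x y} (hP1 : P1.IsPath) (hP2 : P2.IsPath)
    (hdisj : IntDisjoint P1 P2)
    (hA1 : AL W.support P1.support) (hA2 : AL W.support P2.support)
    (hzW : z ∈ W.support) (hz1 : z ∉ P1.support) (hz2 : z ∉ P2.support)
    (hadj : G.Adj x z)
    {u : V} (hu : u ∈ (W.dropUntil z hzW).support) (huP1 : u ∈ P1.support)
    (hmin : ∀ v ∈ ((W.dropUntil z hzW).takeUntil u hu).support,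
      (v ∈ P1.support ∨ v ∈ P2.support) → v = u) :
    ∃ N1 N2 : G.Walk x y, N1.IsPath ∧ N2.IsPath ∧ N1 ≠ N2 ∧ IntDisjoint N1 N2 ∧
      AL W.support N1.support ∧ AL W.support N2.support ∧ z ∈ N1.support := by
  set Tz : G.Walk x z := W.takeUntil z hzW with hTzdef
  set Dz : G.Walk z y := W.dropUntil z hzW with hDzdef
  have hTz : Tz.IsPath := hW.takeUntil hzW
  have hDz : Dz.IsPath := hW.dropUntil hzW
  have hzx : z ≠ x := fun h => (hadj.ne) h.symm
  have hxDz : x ∉ Dz.support := by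
    intro h
    exact hzx (take_drop_inter W hW.support_nodup hzW Tz.start_mem_support h).symm
  have hux : u ≠ x := fun h => hxDz (h ▸ hu)
  have hzu : z ≠ u := fun h => hz1 (h ▸ huP1)
  set Sseg : G.Walk z u := Dz.takeUntil u hu with hSsegdef
  set Di : G.Walk u y := P1.dropUntil u huP1 with hDidef
  have hSseg : Sseg.IsPath := hDz.takeUntil hu
  have hDi : Di.IsPath := hP1.dropUntil huP1
  have hSsub : ∀ v ∈ Sseg.support, v ∈ Dz.support :=
    fun v hv => SimpleGraph.Walk.support_takeUntil_subset _ _ hv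
  have hSsubW : ∀ v ∈ Sseg.support, v ∈ W.support :=
    fun v hv => SimpleGraph.Walk.support_dropUntil_subset _ _ (hSsub v hv)
  have hDisub : ∀ v ∈ Di.support, v ∈ P1.support :=
    fun v hv => SimpleGraph.Walk.support_dropUntil_subset _ _ hv
  have hxDi : x ∉ Di.support := by
    intro h
    exact hux (take_drop_inter P1 hP1.support_nodup huP1 (P1.takeUntil u huP1).start_mem_support h).symm
  set inner : G.Walk z y := Sseg.append Di with hinnerdef
  have hinner : inner.IsPath := by
    refine append_isPath hSseg hDi ?_
    intro v hvS hvD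
    exact hmin v hvS (Or.inl (hDisub v hvD))
  have hxinner : x ∉ inner.support := by
    rw [SimpleGraph.Walk.support_append]
    intro h
    rcases mem_append.1 h with h' | h'
    · exact hxDz (hSsub x h')
    · exact hxDi (List.mem_of_mem_tail h')
  set N1 : G.Walk x y := SimpleGraph.Walk.cons hadj inner with hN1def
  have hN1 : N1.IsPath := hinner.cons hxinner
  have sN1 : N1.support = ([x] ++ Sseg.support) ++ Di.support.tail := by
    rw [hN1def, SimpleGraph.Walk.support_cons, hinnerdef, SimpleGraph.Walk.support_append]
    simp
  have hzN1 : z ∈ N1.support := by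
    rw [sN1]
    exact mem_append_left _ (mem_append_right _ Sseg.start_mem_support)
  -- index transfer between W and Dz
  have sDz : Dz.support = z :: Dz.support.tail := Dz.support_eq_cons
  have hzDzt : z ∉ Dz.support.tail := by
    have := hDz.support_nodup
    rw [sDz] at this
    exact (List.nodup_cons.1 this).1
  have hnotTz : ∀ v ∈ Dz.support.tail, v ∉ Tz.support := by
    intro v hv hvTz
    have := take_drop_inter W hW.support_nodup hzW hvTz (List.mem_of_mem_tail hv)
    subst this; exact hzDzt hv
  have idxWz : ∀ v ∈ Dz.support, W.support.idxOf v + 1 =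
      Tz.support.length + Dz.support.idxOf v := by
    intro v hv
    by_cases hvz : v = z
    · rw [hvz]
      have h1 : W.support.idxOf z = Tz.support.idxOf z := idx_take W hzW Tz.end_mem_support
      have h2 : Tz.support.idxOf z + 1 = Tz.support.length := idx_end_plus Tz hTz.support_nodup
      have h3 : Dz.support.idxOf z = 0 := by rw [sDz, List.idxOf_cons_self]
      omega
    · have hvt : v ∈ Dz.support.tail := by
        rw [sDz] at hv
        rcases mem_cons.1 hv with h' | h'
        · exact absurd h' hvz
        · exact h'
      have h1 : W.support.idxOf v = Tz.support.length + Dz.support.tail.idxOf v := by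
        rw [support_take_drop W hzW, idxOf_append_of_notMem (hnotTz v hvt)]
      have h2 : Dz.support.idxOf v = Dz.support.tail.idxOf v + 1 := by
        conv_lhs => rw [sDz]
        rw [idxOf_cons_ne _ (fun h => hvz h.symm)]
      omega
  -- index transfer between Sseg and Dz
  have idxSD : ∀ v ∈ Sseg.support, Dz.support.idxOf v = Sseg.support.idxOf v :=
    fun v hv => idx_take Dz hu hv
  -- u not in Di tail, z not in Sseg tail etc.
  have sDi : Di.support = u :: Di.support.tail := Di.support_eq_cons
  have huDit : u ∉ Di.support.tail := by
    have := hDi.support_nodup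
    rw [sDi] at this
    exact (List.nodup_cons.1 this).1
  have hnotTu1 : ∀ v ∈ Di.support.tail, v ∉ (P1.takeUntil u huP1).support := by
    intro v hv hvT
    have := take_drop_inter P1 hP1.support_nodup huP1 hvT (List.mem_of_mem_tail hv)
    subst this; exact huDit hv
  have idxP1Di : ∀ v ∈ Di.support.tail,
      P1.support.idxOf v = (P1.takeUntil u huP1).support.length + Di.support.tail.idxOf v := by
    intro v hv
    rw [support_take_drop P1 huP1, idxOf_append_of_notMem (hnotTu1 v hv)]
  have hP1u_lt : ∀ v ∈ Di.support.tail, P1.support.idxOf u < P1.support.idxOf v := by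
    intro v hv
    have h1 : P1.support.idxOf u < (P1.takeUntil u huP1).support.length := by
      rw [idx_take P1 huP1 (P1.takeUntil u huP1).end_mem_support]
      exact idxOf_lt_length_iff.2 (P1.takeUntil u huP1).end_mem_support
    have h2 := idxP1Di v hv
    omega
  have huW : u ∈ W.support := SimpleGraph.Walk.support_dropUntil_subset _ _ hu
  -- (α) : W-index of u ≤ W-index of any Di-tail W-vertex
  have alpha : ∀ c ∈ Di.support.tail, c ∈ W.support →
      W.support.idxOf u ≤ W.support.idxOf c := by
    intro c hc hcW
    exact hA1.le huW hcW huP1 (hDisub c (List.mem_of_mem_tail hc)) (hP1u_lt c hc).le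
  -- (β) : W-index of Sseg vertices ≤ W-index of u
  have beta : ∀ b ∈ Sseg.support, W.support.idxOf b ≤ W.support.idxOf u := by
    intro b hb
    have h1 : Sseg.support.idxOf b ≤ Sseg.support.idxOf u :=
      idx_le_end Sseg hSseg.support_nodup hb
    have h2 := idxWz b (hSsub b hb)
    have h3 := idxWz u hu
    have h4 := idxSD b hb
    have h5 := idxSD u Sseg.end_mem_support
    omega
  refine ⟨N1, P2, hN1, hP2, ?_, ?_, ?_, hA2, hzN1⟩
  · intro h; rw [← h] at hz2; exact hz2 hzN1
  · intro v hv1 hv2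
    rw [sN1] at hv1
    rcases mem_append.1 hv1 with hv1 | hv1
    · rcases mem_append.1 hv1 with hv1 | hv1
      · simp at hv1; subst hv1; exact ⟨Or.inl rfl, Or.inl rfl⟩
      · have hvu := hmin v hv1 (Or.inr hv2)
        rcases (hdisj u huP1 (hvu ▸ hv2)).1 with h' | h'
        · exact absurd h' hux
        · exact ⟨Or.inr (hvu.trans h'), Or.inr (hvu.trans h')⟩
    · exact hdisj v (hDisub v (List.mem_of_mem_tail hv1)) hv2
  · -- AL W N1
    rw [sN1]
    have hstep1 : AL W.support ([x] ++ Sseg.support) := by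
      refine AL_append AL_singleton ?_ ?_ ?_
      · intro b hb c hc hbW hcW hbc
        have hbx : b = x := by simpa using hb
        have hlt2 := idx_start_lt W hcW (fun h => hbc (by rw [hbx, h]))
        rw [hbx]
        exact hlt2
      · intro c hc c' hc' hcW hcW' hlt
        have h2 := idxWz c (hSsub c hc)
        have h3 := idxWz c' (hSsub c' hc')
        have h4 := idxSD c hc
        have h5 := idxSD c' hc'
        omega
      · have := hN1.support_nodup
        rw [sN1] at this
        exact (List.nodup_append.1 this).1
    refine AL_append hstep1 ?_ ?_ ?_
    · intro b hb c hc hbW hcW hbc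
      have hcle := alpha c hc hcW
      have hne2 : W.support.idxOf b ≠ W.support.idxOf c :=
        fun h => hbc ((idxOf_inj hbW).1 h)
      rcases mem_append.1 hb with hb' | hb'
      · have hbx : b = x := by simpa using hb'
        have hW0 : W.support.idxOf x = 0 := by
          rw [W.support_eq_cons, List.idxOf_cons_self]
        have hb0 : W.support.idxOf b = 0 := by rw [hbx, hW0]
        omega
      · have := beta b hb'
        omega
    · intro c hc c' hc' hcW hcW' hlt
      have h1 := idxP1Di c hc
      have h2 := idxP1Di c' hc'
      have h3 : P1.support.idxOf c < P1.support.idxOf c' :=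
        hA1 c c' hcW hcW' (hDisub c (List.mem_of_mem_tail hc))
          (hDisub c' (List.mem_of_mem_tail hc')) hlt
      omega
    · have := hN1.support_nodup
      rw [sN1] at this
      exact this

lemma AL_to_aligned {x y b : V} {W : G.Walk x y} {P : G.Walk x b}
    (h : AL W.support P.support) : Aligned W P := h


end DiracHelpers

/-- Dirac's corollary: if moreover `x` is adjacent to a vertex `z` of `W`, the two
internally disjoint aligned `x,y`-paths can be chosen so that one passes through `z`. -/
theorem stmt_3 {V : Type*} [Fintype V] [DecidableEq V] {G : SimpleGraph V}
    (hG : TwoConnected G) {x y z : V} (hxy : x ≠ y) (W : G.Walk x y) (hW : W.IsPath)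
    (hzW : z ∈ W.support) (hadj : G.Adj x z) :
    ∃ (P1 P2 : G.Walk x y), P1.IsPath ∧ P2.IsPath ∧ P1 ≠ P2 ∧ IntDisjoint P1 P2 ∧
      Aligned W P1 ∧ Aligned W P2 ∧ z ∈ P1.support := by
  obtain ⟨P1, P2, hP1, hP2, hne, hdisj, hA1, hA2⟩ := ML hG hxy W hW
  by_cases hz1 : z ∈ P1.support
  · exact ⟨P1, P2, hP1, hP2, hne, hdisj, AL_to_aligned hA1, AL_to_aligned hA2, hz1⟩
  by_cases hz2 : z ∈ P2.support
  · exact ⟨P2, P1, hP2, hP1, hne.symm, IntDisjoint_symm hdisj, AL_to_aligned hA2,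
      AL_to_aligned hA1, hz2⟩
  · have hDz : (W.dropUntil z hzW).IsPath := hW.dropUntil hzW
    have hyS : y ∈ P1.support ∨ y ∈ P2.support := Or.inl P1.end_mem_support
    obtain ⟨u, hu, hSu, hmin⟩ := exists_first_hit (W.dropUntil z hzW) hDz
      (S := fun v => v ∈ P1.support ∨ v ∈ P2.support) hyS
    rcases hSu with hu1 | hu2
    · obtain ⟨N1, N2, h1, h2, h3, h4, h5, h6, h7⟩ :=
        surgery hW hxy hP1 hP2 hdisj hA1 hA2 hzW hz1 hz2 hadj hu hu1 hmin
      exact ⟨N1, N2, h1, h2, h3, h4, AL_to_aligned h5, AL_to_aligned h6, h7⟩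
    · obtain ⟨N1, N2, h1, h2, h3, h4, h5, h6, h7⟩ :=
        surgery hW hxy hP2 hP1 (IntDisjoint_symm hdisj) hA2 hA1 hzW hz2 hz1 hadj hu hu2
          (fun v hv h => hmin v hv (by tauto))
      exact ⟨N1, N2, h1, h2, h3, h4, AL_to_aligned h5, AL_to_aligned h6, h7⟩
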